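/- arXiv:2103.00469 — 3 statements merged into one kernel-verified Lean document; each statement's English description precedes it below -/
import Mathlib

section
/- Let X be a random variable on a complete Riemannian manifold M with E[d(X,p)²] < ∞ for some p. Then the set of minimizers argmin_{p∈M} E[d(X,p)²] is nonempty and compact. -/
open MeasureTheory Metric

/-- the set of Fréchet means (minimizers of `p ↦ E[d(X,p)²]`) of a
random variable `X` on a complete Riemannian manifold — abstracted as a complete
metric space in which closed bounded sets are compact (proper metric space, by
Hopf–Rinow) — is nonempty and compact, provided `E[d(X,p)²] < ∞` for some `p`. -/
theorem frechet_mean_set_nonempty_compact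
    {Ω : Type*} [MeasurableSpace Ω] (P : Measure Ω) [IsProbabilityMeasure P]
    {M : Type*} [MetricSpace M] [Nonempty M] [ProperSpace M]
    [MeasurableSpace M] [BorelSpace M]
    (X : Ω → M) (hX : Measurable X)
    (F : M → ℝ) (hF : ∀ p, F p = ∫ ω, dist (X ω) p ^ 2 ∂P)
    (p₀ : M) (hfin : Integrable (fun ω => dist (X ω) p₀ ^ 2) P) :
    {p : M | ∀ q, F p ≤ F q}.Nonempty ∧ IsCompact {p : M | ∀ q, F p ≤ F q} := by
  have hFeq : F = fun p => ∫ ω, dist (X ω) p ^ 2 ∂P := funext hF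
  subst hFeq
  set G := fun p : M => ∫ ω, dist (X ω) p ^ 2 ∂P with hG
  have hmeas : ∀ p : M, AEStronglyMeasurable (fun ω => dist (X ω) p ^ 2) P := fun p =>
    ((hX.dist measurable_const).pow_const 2).aestronglyMeasurable
  have hInt : ∀ p : M, Integrable (fun ω => dist (X ω) p ^ 2) P := by
    intro p
    refine Integrable.mono' ((hfin.const_mul 2).add (integrable_const (2 * dist p₀ p ^ 2)))
      (hmeas p) ?_
    filter_upwards with ω
    have h1 := dist_triangle (X ω) p₀ p
    rw [Real.norm_eq_abs, abs_of_nonneg (by positivity)]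
    simp only [Pi.add_apply]
    nlinarith [dist_nonneg (x := X ω) (y := p), dist_nonneg (x := X ω) (y := p₀),
      dist_nonneg (x := p₀) (y := p), sq_nonneg (dist (X ω) p₀ - dist p₀ p)]
  have hcont : Continuous G := by
    rw [continuous_iff_continuousAt]
    intro x₀
    apply continuousAt_of_dominated (bound := fun ω => 2 * dist (X ω) x₀ ^ 2 + 2)
    · filter_upwards with x using hmeas x
    · filter_upwards [Metric.ball_mem_nhds x₀ one_pos] with x hx
      filter_upwards with ω
      have h1 := dist_triangle (X ω) x₀ x
      have h2 : dist x₀ x < 1 := by rwa [dist_comm, ← Metric.mem_ball]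
      rw [Real.norm_eq_abs, abs_of_nonneg (by positivity)]
      nlinarith [dist_nonneg (x := X ω) (y := x), dist_nonneg (x := X ω) (y := x₀),
        dist_nonneg (x := x₀) (y := x), sq_nonneg (dist (X ω) x₀ - dist x₀ x)]
    · exact ((hInt x₀).const_mul 2).add (integrable_const 2)
    · filter_upwards with ω
      exact ((continuous_const.dist continuous_id).pow 2).continuousAt
  have hG0 : 0 ≤ G p₀ := integral_nonneg fun ω => by positivity
  set R := Real.sqrt (4 * G p₀) with hR
  have hbound : ∀ p : M, G p ≤ G p₀ → dist p p₀ ≤ R := by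
    intro p hp
    have key : dist p p₀ ^ 2 ≤ 4 * G p₀ := by
      have h1 : dist p p₀ ^ 2 = ∫ _ω, dist p p₀ ^ 2 ∂P := by
        simp
      have h2 : (∫ _ω, dist p p₀ ^ 2 ∂P)
          ≤ ∫ ω, (2 * dist (X ω) p₀ ^ 2 + 2 * dist (X ω) p ^ 2) ∂P := by
        apply integral_mono (integrable_const _)
          (((hInt p₀).const_mul 2).add ((hInt p).const_mul 2))
        intro ω
        have h3 := dist_triangle p (X ω) p₀
        have h4 : dist p (X ω) = dist (X ω) p := dist_comm _ _
        simp only [Pi.add_apply]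
        nlinarith [dist_nonneg (x := X ω) (y := p), dist_nonneg (x := X ω) (y := p₀),
          dist_nonneg (x := p) (y := p₀), sq_nonneg (dist (X ω) p₀ - dist (X ω) p)]
      rw [integral_add ((hInt p₀).const_mul 2) ((hInt p).const_mul 2), integral_const_mul, integral_const_mul] at h2
      have : (∫ ω, dist (X ω) p₀ ^ 2 ∂P) = G p₀ := rfl
      have : (∫ ω, dist (X ω) p ^ 2 ∂P) = G p := rfl
      rw [h1]
      nlinarith [hp]
    calc dist p p₀ = Real.sqrt (dist p p₀ ^ 2) := (Real.sqrt_sq dist_nonneg).symm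
      _ ≤ R := Real.sqrt_le_sqrt key
  have hRnn : 0 ≤ R := Real.sqrt_nonneg _
  have hK : IsCompact (closedBall p₀ R) := isCompact_closedBall p₀ R
  obtain ⟨m, hmK, hmin⟩ := hK.exists_isMinOn ⟨p₀, mem_closedBall_self hRnn⟩ hcont.continuousOn
  have hmglobal : ∀ q, G m ≤ G q := by
    intro q
    by_cases hq : G q ≤ G p₀
    · exact hmin (mem_closedBall.mpr (hbound q hq))
    · exact le_trans (hmin (mem_closedBall_self hRnn)) (le_of_not_ge hq)
  refine ⟨⟨m, hmglobal⟩, ?_⟩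
  apply hK.of_isClosed_subset
  · have : {p : M | ∀ q, G p ≤ G q} = ⋂ q, {p : M | G p ≤ G q} := by
      ext p; simp
    rw [this]
    exact isClosed_iInter fun q => isClosed_le hcont continuous_const
  · intro p hp
    exact mem_closedBall.mpr (hbound p (hp p₀))
end

section
/- On the 2-sphere S²_𝒦 of constant curvature 𝒦 > 0 with geodesic distance d_s, let μ̃ be a point, Ṽ a unit tangent vector at μ̃, and γ̃(t) = exp_{μ̃}(tṼ). For the measure ζ = (1−ε)δ_{μ̃} + (ε/2)(δ_{γ̃(t)} + δ_{γ̃(−t)}) with 0 < ε < 1 and 0 < t < π/√𝒦 satisfying t√𝒦·cot(t√𝒦) = −(1−ε)/(2ε), the point μ̃ is the unique minimizer of the Fréchet function F_ζ(q) = (ε/2)d_s²(q,γ̃(t)) + (ε/2)d_s²(q,γ̃(−t)) + (1−ε)d_s²(q,μ̃). -/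
open Real

noncomputable section

/-- Geodesic distance on the sphere of curvature `K > 0` (radius `1/√K`),
realized as `{x : ℝ³ | ‖x‖ = 1/√K}`: `d_s(x,y) = (1/√K)·arccos(K⟪x,y⟫)`. -/
def sphereDist (K : ℝ) (x y : EuclideanSpace ℝ (Fin 3)) : ℝ :=
  (1 / Real.sqrt K) * Real.arccos (K * inner ℝ x y)

/-- The unit-speed geodesic through `μ` in direction `V` on the sphere of
curvature `K` (with `‖μ‖ = 1/√K`, `‖V‖ = 1`, `⟪μ,V⟫ = 0`). -/
def sphereGeodesic (K : ℝ) (μ V : EuclideanSpace ℝ (Fin 3)) (t : ℝ) :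
    EuclideanSpace ℝ (Fin 3) :=
  Real.cos (t * Real.sqrt K) • μ + (Real.sin (t * Real.sqrt K) / Real.sqrt K) • V

/-! ### Auxiliary lemmas -/

lemma aux_mul_cos_le_sin {x : ℝ} (hx : 0 ≤ x) (hx' : x ≤ π) : x * Real.cos x ≤ Real.sin x := by
  rcases le_or_gt (π / 2) x with h | h
  · have h1 : Real.cos x ≤ 0 := Real.cos_nonpos_of_pi_div_two_le_of_le h (by linarith)
    have h2 : 0 ≤ Real.sin x := Real.sin_nonneg_of_nonneg_of_le_pi hx hx'
    nlinarith
  · rcases eq_or_lt_of_le hx with rfl | hx0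
    · simp
    · have htan := Real.lt_tan hx0 h
      have hcos : 0 < Real.cos x := Real.cos_pos_of_mem_Ioo ⟨by linarith, h⟩
      rw [Real.tan_eq_sin_div_cos, lt_div_iff₀ hcos] at htan
      linarith

lemma aux_sin_ratio_mono {a b : ℝ} (ha : 0 < a) (hab : a ≤ b) (hb : b < π) :
    a / Real.sin a ≤ b / Real.sin b := by
  have hsa : 0 < Real.sin a := Real.sin_pos_of_pos_of_lt_pi ha (lt_of_le_of_lt hab hb)
  have hsb : 0 < Real.sin b := Real.sin_pos_of_pos_of_lt_pi (lt_of_lt_of_le ha hab) hb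
  have hanti : AntitoneOn (fun x => Real.sin x / x) (Set.Icc a b) := by
    apply antitoneOn_of_deriv_nonpos (convex_Icc a b)
    · exact Real.continuous_sin.continuousOn.div continuousOn_id
        (fun x hx => (lt_of_lt_of_le ha hx.1).ne')
    · intro x hx
      rw [interior_Icc] at hx
      have hx0 : 0 < x := ha.trans hx.1
      exact ((Real.hasDerivAt_sin x).div (hasDerivAt_id x) hx0.ne').differentiableAt.differentiableWithinAt
    · intro x hx
      rw [interior_Icc] at hx
      have hx0 : 0 < x := ha.trans hx.1
      have hd : HasDerivAt (fun x => Real.sin x / x)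
          ((Real.cos x * x - Real.sin x * 1) / x ^ 2) x :=
        (Real.hasDerivAt_sin x).div (hasDerivAt_id x) hx0.ne'
      rw [hd.deriv]
      apply div_nonpos_of_nonpos_of_nonneg
      · have := aux_mul_cos_le_sin hx0.le (le_of_lt (hx.2.trans hb))
        nlinarith
      · positivity
  have h := hanti ⟨le_refl a, hab⟩ ⟨hab, le_refl b⟩ hab
  simp only at h
  rw [div_le_div_iff₀ (ha.trans_le hab) ha] at h
  rw [div_le_div_iff₀ hsa hsb]
  nlinarith

lemma aux_arccos_le_arccos {x y : ℝ} (hx : -1 ≤ x) (hxy : x ≤ y) (hy : y ≤ 1) :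
    Real.arccos y ≤ Real.arccos x := by
  rcases eq_or_lt_of_le hxy with rfl | h
  · exact le_rfl
  · exact (Real.strictAntiOn_arccos ⟨hx, hxy.trans hy⟩ ⟨hx.trans hxy, hy⟩ h).le

lemma aux_arccos_sq_convexOn :
    ConvexOn ℝ (Set.Icc (-1 : ℝ) 1) (fun x : ℝ => Real.arccos x ^ 2) := by
  apply MonotoneOn.convexOn_of_deriv (convex_Icc _ _)
  · exact (Real.continuous_arccos.pow 2).continuousOn
  · intro x hx
    rw [interior_Icc] at hx
    exact ((Real.hasDerivAt_arccos hx.1.ne' hx.2.ne).pow 2).differentiableAt.differentiableWithinAt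
  · rw [interior_Icc]
    intro x hx y hy hxy
    have hdx : deriv (fun x : ℝ => Real.arccos x ^ 2) x
        = 2 * Real.arccos x * (-(1 / Real.sqrt (1 - x ^ 2))) := by
      rw [((Real.hasDerivAt_arccos hx.1.ne' hx.2.ne).fun_pow 2).deriv]; ring
    have hdy : deriv (fun x : ℝ => Real.arccos x ^ 2) y
        = 2 * Real.arccos y * (-(1 / Real.sqrt (1 - y ^ 2))) := by
      rw [((Real.hasDerivAt_arccos hy.1.ne' hy.2.ne).fun_pow 2).deriv]; ring
    rw [hdx, hdy]
    rw [← Real.sin_arccos x, ← Real.sin_arccos y]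
    set a := Real.arccos y with hadef
    set b := Real.arccos x with hbdef
    have hab : a ≤ b := aux_arccos_le_arccos hx.1.le hxy hy.2.le
    have ha0 : 0 < a := Real.arccos_pos.2 hy.2
    have hbπ : b < π := by
      have hx1 : (-1:ℝ) < x := hx.1
      have hx2 : x < 1 := hx.2
      have hne : Real.arccos x ≠ π := by
        intro hcon
        have hcx := Real.cos_arccos hx1.le hx2.le
        rw [hcon, Real.cos_pi] at hcx
        linarith
      exact lt_of_le_of_ne (Real.arccos_le_pi x) hne
    have hsa : 0 < Real.sin a := Real.sin_pos_of_pos_of_lt_pi ha0 (lt_of_le_of_lt hab hbπ)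
    have hsb : 0 < Real.sin b := Real.sin_pos_of_pos_of_lt_pi (lt_of_lt_of_le ha0 hab) hbπ
    have hmono : a / Real.sin a ≤ b / Real.sin b := aux_sin_ratio_mono ha0 hab hbπ
    rw [div_le_div_iff₀ hsa hsb] at hmono
    have e1 : 2 * b * (-(1 / Real.sin b)) = -(2 * b / Real.sin b) := by ring
    have e2 : 2 * a * (-(1 / Real.sin a)) = -(2 * a / Real.sin a) := by ring
    rw [e1, e2, neg_le_neg_iff, div_le_div_iff₀ hsa hsb]
    nlinarith

lemma aux_geo_norm (K : ℝ) (hK : 0 < K) (μ V : EuclideanSpace ℝ (Fin 3))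
    (hμ : ‖μ‖ = 1 / Real.sqrt K) (hV : ‖V‖ = 1) (hperp : inner ℝ μ V = (0 : ℝ))
    (t' : ℝ) : ‖sphereGeodesic K μ V t'‖ = 1 / Real.sqrt K := by
  have hs : 0 < Real.sqrt K := Real.sqrt_pos.2 hK
  have hs2 : Real.sqrt K ^ 2 = K := Real.sq_sqrt hK.le
  have hn2 : ‖sphereGeodesic K μ V t'‖ ^ 2 = (1 / Real.sqrt K) ^ 2 := by
    rw [sphereGeodesic, norm_add_sq_real]
    rw [norm_smul, norm_smul, real_inner_smul_left, real_inner_smul_right, hperp]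
    simp only [Real.norm_eq_abs, mul_zero, mul_pow]
    rw [hμ, hV, sq_abs, sq_abs]
    have hsne : Real.sqrt K ≠ 0 := hs.ne'
    field_simp
    rw [mul_zero, add_zero, Real.cos_sq_add_sin_sq]
  have h4 : (‖sphereGeodesic K μ V t'‖ - 1 / Real.sqrt K)
      * (‖sphereGeodesic K μ V t'‖ + 1 / Real.sqrt K) = 0 := by nlinarith [hn2]
  rcases mul_eq_zero.1 h4 with h | h
  · linarith
  · have h1 := norm_nonneg (sphereGeodesic K μ V t')
    have h2 : 0 < 1 / Real.sqrt K := by positivity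
    linarith

lemma aux_core {θ c ε : ℝ} (hθ0 : 0 < θ) (hθπ : θ < π) (hcos : Real.cos θ < 0)
    (hc0 : 0 < c) (hcπ : c ≤ π) (hε : 0 < ε)
    (hrel : (1 - ε) * Real.sin θ = 2 * ε * θ * (-Real.cos θ)) :
    ε * θ ^ 2 < ε * Real.arccos (Real.cos θ * Real.cos c) ^ 2 + (1 - ε) * c ^ 2 := by
  set ψ := Real.arccos (Real.cos θ * Real.cos c) with hψdef
  have hsθ : 0 < Real.sin θ := Real.sin_pos_of_pos_of_lt_pi hθ0 hθπ
  have hθhalf : π / 2 < θ := by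
    by_contra hcon
    push_neg at hcon
    have := Real.cos_nonneg_of_mem_Icc ⟨by linarith [Real.pi_pos], hcon⟩
    linarith
  have hcc1 : Real.cos c ≤ 1 := Real.cos_le_one c
  have hcc2 : -1 ≤ Real.cos c := Real.neg_one_le_cos c
  have hct2 : -1 ≤ Real.cos θ := Real.neg_one_le_cos θ
  have hm1 : -1 ≤ Real.cos θ * Real.cos c := by nlinarith
  have h1 : Real.cos θ * Real.cos c ≤ 1 := by nlinarith
  have hcosψ : Real.cos ψ = Real.cos θ * Real.cos c := Real.cos_arccos hm1 h1
  have hψθ : ψ ≤ θ := by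
    have h2 : Real.cos θ ≤ Real.cos θ * Real.cos c := by nlinarith
    have := aux_arccos_le_arccos hct2 h2 h1
    rwa [Real.arccos_cos hθ0.le hθπ.le] at this
  have hψlow : π - θ ≤ ψ := by
    have h2 : Real.cos θ * Real.cos c ≤ Real.cos (π - θ) := by
      rw [Real.cos_pi_sub]; nlinarith
    have h3 : -1 ≤ Real.cos (π - θ) := Real.neg_one_le_cos _
    have := aux_arccos_le_arccos hm1 h2 (Real.cos_le_one _)
    rwa [Real.arccos_cos (by linarith) (by linarith)] at this
  have hψ0 : 0 ≤ ψ := Real.arccos_nonneg _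
  -- key: (θ - ψ) * sin θ ≤ cos ψ - cos θ
  have hkey : (θ - ψ) * Real.sin θ ≤ Real.cos ψ - Real.cos θ := by
    have hanti : AntitoneOn (fun u => Real.cos u + u * Real.sin θ) (Set.Icc (π - θ) θ) := by
      apply antitoneOn_of_deriv_nonpos (convex_Icc _ _)
      · exact (Real.continuous_cos.add (continuous_id.mul continuous_const)).continuousOn
      · intro x hx
        exact ((Real.differentiable_cos x).add
          ((differentiable_id x).mul (differentiable_const _ x))).differentiableWithinAt
      · intro x hx
        rw [interior_Icc] at hx
        have hd : HasDerivAt (fun u => Real.cos u + u * Real.sin θ)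
            (-Real.sin x + 1 * Real.sin θ) x :=
          (Real.hasDerivAt_cos x).add ((hasDerivAt_id x).mul_const _)
        rw [hd.deriv]
        have hss : Real.sin θ - Real.sin x
            = 2 * Real.sin ((θ - x) / 2) * Real.cos ((θ + x) / 2) := Real.sin_sub_sin θ x
        have hs1 : 0 ≤ Real.sin ((θ - x) / 2) :=
          Real.sin_nonneg_of_nonneg_of_le_pi (by linarith [hx.2]) (by linarith [hx.1, Real.pi_pos])
        have hs2 : Real.cos ((θ + x) / 2) ≤ 0 :=
          Real.cos_nonpos_of_pi_div_two_le_of_le (by linarith [hx.1])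
            (by linarith [hx.2, Real.pi_pos])
        nlinarith
    have := hanti ⟨hψlow, hψθ⟩ ⟨by linarith, le_refl θ⟩ hψθ
    simp only at this
    linarith
  -- 1 - cos c ≤ c^2 / 2
  have hcc : 1 - Real.cos c ≤ c ^ 2 / 2 := by
    have e : Real.cos c = 1 - 2 * Real.sin (c / 2) ^ 2 := by
      have h1 := Real.cos_two_mul' (c / 2)
      have h2 := Real.sin_sq_add_cos_sq (c / 2)
      rw [show 2 * (c / 2) = c by ring] at h1
      linarith
    have h2 : Real.sin (c / 2) ≤ c / 2 := Real.sin_le (by linarith)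
    have h3 : 0 ≤ Real.sin (c / 2) :=
      Real.sin_nonneg_of_nonneg_of_le_pi (by linarith) (by linarith [Real.pi_pos])
    nlinarith
  have hncos : 0 < -Real.cos θ := by linarith
  -- chain
  have hkey' : (θ - ψ) * Real.sin θ ≤ (-Real.cos θ) * (1 - Real.cos c) := by
    rw [hcosψ] at hkey; nlinarith [hkey]
  have s1 : (θ ^ 2 - ψ ^ 2) * Real.sin θ ≤ 2 * θ * ((θ - ψ) * Real.sin θ) := by
    nlinarith [mul_nonneg (sq_nonneg (θ - ψ)) hsθ.le]
  have s2 : 2 * θ * ((θ - ψ) * Real.sin θ) ≤ 2 * θ * ((-Real.cos θ) * (1 - Real.cos c)) :=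
    mul_le_mul_of_nonneg_left hkey' (by linarith)
  have s3 : 2 * θ * ((-Real.cos θ) * (1 - Real.cos c)) ≤ 2 * θ * ((-Real.cos θ) * (c ^ 2 / 2)) := by
    apply mul_le_mul_of_nonneg_left _ (by linarith : (0:ℝ) ≤ 2 * θ)
    exact mul_le_mul_of_nonneg_left hcc hncos.le
  have s4 : 2 * θ * ((-Real.cos θ) * (c ^ 2 / 2)) < 2 * θ * (-Real.cos θ) * c ^ 2 := by
    nlinarith [mul_pos (mul_pos hθ0 hncos) (pow_pos hc0 2)]
  have key2 : (θ ^ 2 - ψ ^ 2) * Real.sin θ < 2 * θ * (-Real.cos θ) * c ^ 2 := by linarith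
  have h6 : ε * ((θ ^ 2 - ψ ^ 2) * Real.sin θ) < ε * (2 * θ * (-Real.cos θ) * c ^ 2) :=
    mul_lt_mul_of_pos_left key2 hε
  have h7 : ε * (2 * θ * (-Real.cos θ) * c ^ 2) = (1 - ε) * Real.sin θ * c ^ 2 := by
    linear_combination (-(c ^ 2)) * hrel
  rw [← mul_lt_mul_iff_left₀ hsθ]
  linarith [h6, h7]

set_option maxHeartbeats 1000000 in
/-- on the sphere `S²_K` of curvature `K > 0`, for
`ζ = (1−ε)δ_μ + (ε/2)(δ_{γ(t)} + δ_{γ(−t)})` with `0 < ε < 1`,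
`0 < t < π/√K` and `t√K·cot(t√K) = −(1−ε)/(2ε)`, the point `μ` is the unique
minimizer of the Fréchet function
`F_ζ(q) = (ε/2)d_s²(q,γ(t)) + (ε/2)d_s²(q,γ(−t)) + (1−ε)d_s²(q,μ)`. -/
theorem sphere_mixture_unique_frechet_mean
    (K : ℝ) (hK : 0 < K)
    (μ V : EuclideanSpace ℝ (Fin 3))
    (hμ : ‖μ‖ = 1 / Real.sqrt K) (hV : ‖V‖ = 1) (hperp : inner ℝ μ V = (0 : ℝ))
    (ε t : ℝ) (hε0 : 0 < ε) (hε1 : ε < 1)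
    (ht0 : 0 < t) (ht : t < π / Real.sqrt K)
    (hcot : t * Real.sqrt K * Real.cot (t * Real.sqrt K) = -(1 - ε) / (2 * ε))
    (F : EuclideanSpace ℝ (Fin 3) → ℝ)
    (hF : ∀ q, F q =
      (ε / 2) * sphereDist K q (sphereGeodesic K μ V t) ^ 2
        + (ε / 2) * sphereDist K q (sphereGeodesic K μ V (-t)) ^ 2
        + (1 - ε) * sphereDist K q μ ^ 2) :
    ∀ q : EuclideanSpace ℝ (Fin 3), ‖q‖ = 1 / Real.sqrt K → q ≠ μ → F μ < F q := by
  intro q hq hqμ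
  set s := Real.sqrt K with hsdef
  have hs : 0 < s := Real.sqrt_pos.2 hK
  have hs2 : s ^ 2 = K := Real.sq_sqrt hK.le
  set θ := t * s with hθdef
  have hθ0 : 0 < θ := mul_pos ht0 hs
  have hθπ : θ < π := by
    rw [hθdef]
    calc t * s < (π / s) * s := by exact mul_lt_mul_of_pos_right ht hs
    _ = π := by field_simp
  have hsθ : 0 < Real.sin θ := Real.sin_pos_of_pos_of_lt_pi hθ0 hθπ
  -- relation from the cot hypothesis
  have hrel : (1 - ε) * Real.sin θ = 2 * ε * θ * (-Real.cos θ) := by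
    rw [Real.cot_eq_cos_div_sin] at hcot
    have h2ε : (2 : ℝ) * ε ≠ 0 := by positivity
    field_simp at hcot
    nlinarith [hcot]
  have hcosθ : Real.cos θ < 0 := by
    have hpos : 0 < (1 - ε) * Real.sin θ := mul_pos (by linarith) hsθ
    rcases lt_trichotomy (Real.cos θ) 0 with h | h | h
    · exact h
    · exfalso
      have hz : (1 - ε) * Real.sin θ = 0 := by rw [hrel, h]; ring
      nlinarith [hpos]
    · exfalso
      have : 2 * ε * θ * (-Real.cos θ) < 0 := by
        have h1 : 0 < 2 * ε * θ := by positivity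
        nlinarith
      linarith
  -- inner ℝ product computations
  have hμμ : (inner ℝ μ μ : ℝ) = 1 / K := by
    rw [real_inner_self_eq_norm_sq, hμ]
    rw [div_pow, one_pow, hs2]
  have hqnorm2 : (inner ℝ q q : ℝ) = 1 / K := by
    rw [real_inner_self_eq_norm_sq, hq]
    rw [div_pow, one_pow, hs2]
  -- geodesic points
  have hgeo_inner : ∀ t' x, (inner ℝ x (sphereGeodesic K μ V t') : ℝ)
      = Real.cos (t' * s) * (inner ℝ x μ : ℝ) + (Real.sin (t' * s) / s) * (inner ℝ x V : ℝ) := by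
    intro t' x
    rw [sphereGeodesic, inner_add_right, real_inner_smul_right, real_inner_smul_right]
  have hgeo_norm : ∀ t', ‖sphereGeodesic K μ V t'‖ = 1 / s :=
    fun t' => aux_geo_norm K hK μ V hμ hV hperp t'
  -- u and its bounds
  set u : ℝ := K * (inner ℝ q μ : ℝ) with hudef
  have habs : |(inner ℝ q μ : ℝ)| ≤ 1 / K := by
    have := abs_real_inner_le_norm q μ
    rw [hq, hμ] at this
    calc |(inner ℝ q μ : ℝ)| ≤ 1 / s * (1 / s) := this
    _ = 1 / K := by rw [← hs2]; field_simp
  have hu2 : -1 ≤ u := by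
    have := neg_le_of_abs_le habs
    rw [hudef]
    have : -(1 / K) ≤ (inner ℝ q μ : ℝ) := this
    calc (-1 : ℝ) = K * (-(1/K)) := by field_simp
    _ ≤ K * (inner ℝ q μ : ℝ) := by exact mul_le_mul_of_nonneg_left this hK.le
  have hu1 : u < 1 := by
    have hne : ‖μ‖ • q ≠ ‖q‖ • μ := by
      intro hcon
      rw [hq, hμ] at hcon
      apply hqμ
      have := smul_right_injective (EuclideanSpace ℝ (Fin 3)) (by positivity : (1:ℝ)/s ≠ 0) hcon
      exact this
    have := inner_lt_norm_mul_iff_real.2 hne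
    rw [hq, hμ] at this
    rw [hudef]
    calc K * (inner ℝ q μ : ℝ) < K * (1 / s * (1 / s)) := by
          exact mul_lt_mul_of_pos_left this hK
    _ = 1 := by rw [← hs2]; field_simp
  -- c and distances
  set c : ℝ := Real.arccos u with hcdef
  have hc0 : 0 < c := Real.arccos_pos.2 hu1
  have hcπ : c ≤ π := Real.arccos_le_pi u
  have hcosc : Real.cos c = u := Real.cos_arccos hu2 hu1.le
  -- A and B
  set A : ℝ := K * (inner ℝ q (sphereGeodesic K μ V t) : ℝ) with hAdef
  set B : ℝ := K * (inner ℝ q (sphereGeodesic K μ V (-t)) : ℝ) with hBdef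
  have hABsum : A + B = 2 * (Real.cos θ * u) := by
    rw [hAdef, hBdef, hgeo_inner, hgeo_inner]
    rw [show -t * s = -(t * s) by ring, Real.cos_neg, Real.sin_neg, ← hθdef]
    rw [hudef]; ring
  have hAmem : A ∈ Set.Icc (-1 : ℝ) 1 := by
    have h := abs_real_inner_le_norm q (sphereGeodesic K μ V t)
    rw [hq, hgeo_norm] at h
    have h2 : |(inner ℝ q (sphereGeodesic K μ V t) : ℝ)| ≤ 1 / K := by
      calc |(inner ℝ q (sphereGeodesic K μ V t) : ℝ)| ≤ 1 / s * (1 / s) := h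
      _ = 1 / K := by rw [← hs2]; field_simp
    have h3 := abs_le.1 h2
    constructor
    · rw [hAdef]
      calc (-1 : ℝ) = K * (-(1/K)) := by field_simp
      _ ≤ K * (inner ℝ q (sphereGeodesic K μ V t) : ℝ) := mul_le_mul_of_nonneg_left h3.1 hK.le
    · rw [hAdef]
      calc K * (inner ℝ q (sphereGeodesic K μ V t) : ℝ) ≤ K * (1/K) :=
            mul_le_mul_of_nonneg_left h3.2 hK.le
      _ = 1 := by field_simp
  have hBmem : B ∈ Set.Icc (-1 : ℝ) 1 := by
    have h := abs_real_inner_le_norm q (sphereGeodesic K μ V (-t))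
    rw [hq, hgeo_norm] at h
    have h2 : |(inner ℝ q (sphereGeodesic K μ V (-t)) : ℝ)| ≤ 1 / K := by
      calc |(inner ℝ q (sphereGeodesic K μ V (-t)) : ℝ)| ≤ 1 / s * (1 / s) := h
      _ = 1 / K := by rw [← hs2]; field_simp
    have h3 := abs_le.1 h2
    constructor
    · rw [hBdef]
      calc (-1 : ℝ) = K * (-(1/K)) := by field_simp
      _ ≤ K * (inner ℝ q (sphereGeodesic K μ V (-t)) : ℝ) := mul_le_mul_of_nonneg_left h3.1 hK.le
    · rw [hBdef]
      calc K * (inner ℝ q (sphereGeodesic K μ V (-t)) : ℝ) ≤ K * (1/K) :=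
            mul_le_mul_of_nonneg_left h3.2 hK.le
      _ = 1 := by field_simp
  -- convexity step
  have hconv0 := aux_arccos_sq_convexOn.2 hAmem hBmem (by norm_num : (0:ℝ) ≤ 1/2)
    (by norm_num : (0:ℝ) ≤ 1/2) (by norm_num)
  have hmid : (1 / 2 : ℝ) • A + (1 / 2 : ℝ) • B = Real.cos θ * Real.cos c := by
    rw [smul_eq_mul, smul_eq_mul, hcosc]
    linarith [hABsum]
  rw [hmid] at hconv0
  have hconv : Real.arccos (Real.cos θ * Real.cos c) ^ 2
      ≤ 1 / 2 * Real.arccos A ^ 2 + 1 / 2 * Real.arccos B ^ 2 := by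
    simpa using hconv0
  -- core inequality
  have hcore := aux_core hθ0 hθπ hcosθ hc0 hcπ hε0 hrel
  -- F values
  have hμγ : ∀ t' : ℝ, K * (inner ℝ μ (sphereGeodesic K μ V t') : ℝ) = Real.cos (t' * s) := by
    intro t'
    rw [hgeo_inner, hμμ, hperp]
    field_simp
    ring
  have hFμ : F μ = ε * ((1 / s) ^ 2 * θ ^ 2) := by
    rw [hF]
    rw [sphereDist, sphereDist, sphereDist]
    rw [hμγ, hμγ, hμμ]
    rw [show -t * s = -(t * s) by ring, Real.cos_neg, ← hθdef]
    rw [Real.arccos_cos hθ0.le hθπ.le]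
    rw [show K * (1 / K) = 1 by field_simp, Real.arccos_one]
    ring
  have hFq : F q = (ε / 2) * ((1 / s) ^ 2 * Real.arccos A ^ 2)
      + (ε / 2) * ((1 / s) ^ 2 * Real.arccos B ^ 2)
      + (1 - ε) * ((1 / s) ^ 2 * c ^ 2) := by
    rw [hF]
    rw [sphereDist, sphereDist, sphereDist, ← hAdef, ← hBdef, ← hudef, ← hcdef]
    ring
  rw [hFμ, hFq]
  have hr2 : (0:ℝ) < (1 / s) ^ 2 := by positivity
  have step1 : ε * θ ^ 2 < ε * (1 / 2 * Real.arccos A ^ 2 + 1 / 2 * Real.arccos B ^ 2)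
      + (1 - ε) * c ^ 2 := by
    have h9 := mul_le_mul_of_nonneg_left hconv hε0.le
    linarith only [h9, hcore]
  have step2 := mul_lt_mul_of_pos_left step1 hr2
  linarith only [step2]

end
end

section
/- Let M be a complete Riemannian manifold with sectional curvature ≤ 𝒦 > 0, μ ∈ M, γ a geodesic through μ, and let ε, t satisfy t√𝒦·cot(t√𝒦) = −(1−ε)/(2ε) with 0 < t < π/√𝒦. Define F^{t,ε}(p) = (ε/2)d²(p,γ(t)) + (ε/2)d²(p,γ(−t)) + (1−ε)d²(p,μ). If the comparison measure ζ on S²_𝒦 (with the same weights at comparison points) has unique Fréchet mean μ̃ with F_ζ(μ̃) = F^{t,ε}(μ), and if the Toponogov comparison inequalities hold, then μ is the unique minimizer of F^{t,ε} restricted to the open ball B(μ, π/√𝒦). -/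
open Real

noncomputable section

/-- on a complete manifold `M` with `sec ≤ K`, let
`F^{t,ε}(p) = (ε/2)d²(p,γ(t)) + (ε/2)d²(p,γ(−t)) + (1−ε)d²(p,μ)` with
`t√K·cot(t√K) = −(1−ε)/(2ε)`, `0 < t < π/√K`. If the comparison measure `ζ` on
`S²_K` has unique Fréchet mean `μ̃` with `F_ζ(μ̃) = F^{t,ε}(μ)`, and every
`p ∈ B(μ, π/√K)` admits a Toponogov comparison point `p̃` on `S²_K` with
`d_s(p̃,μ̃) = d(p,μ)`, `d_s(p̃,γ̃(±t)) ≤ d(p,γ(±t))`, then `μ` is the unique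
minimizer of `F^{t,ε}` on the open ball `B(μ, π/√K)`. -/
theorem mean_uniqueness_transfers_from_sphere
    {M : Type*} [MetricSpace M] [CompleteSpace M]
    (K : ℝ) (hK : 0 < K)
    (μ : M) (γ : ℝ → M) (hγ0 : γ 0 = μ)
    (ε t : ℝ) (hε0 : 0 < ε) (hε1 : ε < 1)
    (ht0 : 0 < t) (ht : t < π / Real.sqrt K)
    (hcot : t * Real.sqrt K * Real.cot (t * Real.sqrt K) = -(1 - ε) / (2 * ε))
    (F : M → ℝ)
    (hF : ∀ p, F p = (ε / 2) * dist p (γ t) ^ 2 + (ε / 2) * dist p (γ (-t)) ^ 2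
        + (1 - ε) * dist p μ ^ 2)
    -- comparison configuration on the sphere of curvature `K`
    (μs V : EuclideanSpace ℝ (Fin 3))
    (hμs : ‖μs‖ = 1 / Real.sqrt K) (hV : ‖V‖ = 1) (hμV : inner ℝ μs V = (0 : ℝ))
    (Fζ : EuclideanSpace ℝ (Fin 3) → ℝ)
    (hFζ : ∀ q, Fζ q =
      (ε / 2) * sphereDist K q (sphereGeodesic K μs V t) ^ 2
        + (ε / 2) * sphereDist K q (sphereGeodesic K μs V (-t)) ^ 2
        + (1 - ε) * sphereDist K q μs ^ 2)
    (hunique : ∀ q : EuclideanSpace ℝ (Fin 3),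
      ‖q‖ = 1 / Real.sqrt K → q ≠ μs → Fζ μs < Fζ q)
    (hvalue : Fζ μs = F μ)
    -- Toponogov comparison inequalities
    (htop : ∀ p : M, dist p μ < π / Real.sqrt K →
      ∃ ps : EuclideanSpace ℝ (Fin 3), ‖ps‖ = 1 / Real.sqrt K ∧
        sphereDist K ps μs = dist p μ ∧
        sphereDist K ps (sphereGeodesic K μs V t) ≤ dist p (γ t) ∧
        sphereDist K ps (sphereGeodesic K μs V (-t)) ≤ dist p (γ (-t))) :
    ∀ p : M, dist p μ < π / Real.sqrt K → p ≠ μ → F μ < F p := by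
  intro p hp hne
  obtain ⟨ps, hps, heq, h1, h2⟩ := htop p hp
  have hsq : Real.sqrt K ≠ 0 := ne_of_gt (Real.sqrt_pos.mpr hK)
  have hps_ne : ps ≠ μs := by
    intro h
    apply hne
    have hzero : sphereDist K μs μs = 0 := by
      unfold sphereDist
      have hinn : (inner ℝ μs μs : ℝ) = ‖μs‖ ^ 2 := real_inner_self_eq_norm_sq μs
      rw [hinn, hμs]
      have : K * (1 / Real.sqrt K) ^ 2 = 1 := by
        rw [div_pow, one_pow, Real.sq_sqrt hK.le]
        field_simp
      rw [this, Real.arccos_one, mul_zero]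
    have : dist p μ = 0 := by rw [← heq, h, hzero]
    exact dist_eq_zero.mp this
  have hd0 : ∀ x y, 0 ≤ sphereDist K x y := fun x y =>
    mul_nonneg (by positivity) (Real.arccos_nonneg _)
  have hle : Fζ ps ≤ F p := by
    rw [hFζ, hF]
    have e1 : sphereDist K ps (sphereGeodesic K μs V t) ^ 2 ≤ dist p (γ t) ^ 2 :=
      pow_le_pow_left₀ (hd0 _ _) h1 2
    have e2 : sphereDist K ps (sphereGeodesic K μs V (-t)) ^ 2 ≤ dist p (γ (-t)) ^ 2 :=
      pow_le_pow_left₀ (hd0 _ _) h2 2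
    have e3 : sphereDist K ps μs ^ 2 = dist p μ ^ 2 := by rw [heq]
    have hε2 : (0:ℝ) ≤ ε / 2 := by linarith
    have h1ε : (0:ℝ) ≤ 1 - ε := by linarith
    nlinarith [mul_le_mul_of_nonneg_left e1 hε2, mul_le_mul_of_nonneg_left e2 hε2]
  calc F μ = Fζ μs := hvalue.symm
    _ < Fζ ps := hunique ps hps hps_ne
    _ ≤ F p := hle


end
end
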